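/- For every fixed γ ∈ [0, 1], the equation 4α⁶ − 16α⁵ + 26α³ − 16α² + 1 = γ·(2α⁶ − 8α⁵ − α⁴ + 14α³ − 10α² + 2α) has exactly one solution α in the open interval (0, 1/2); equivalently, the map α ↦ f(α, γ) has exactly one critical point in (0, 1/2). -/

import Mathlib

noncomputable section

/-- Attacker's expected per-block reward (normalized by the block reward) under
Eyal–Sirer selfish mining, numerator. -/
def Na (α γ : ℝ) : ℝ :=
  (-2*α^4 + 5*α^3 - 4*α^2 + α) * γ + 4*α^4 - 9*α^3 + 4*α^2

/-- Honest miners' expected per-block reward (normalized by the block reward)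
under Eyal–Sirer selfish mining, numerator. -/
def Nh (α γ : ℝ) : ℝ :=
  (2*α^4 - 5*α^3 + 4*α^2 - α) * γ - 4*α^4 + 10*α^3 - 6*α^2 - α + 1

/-- Common denominator of the Eyal–Sirer reward expressions. -/
def D (α : ℝ) : ℝ := 2*α^3 - 4*α^2 + 1

/-- Honest miners' share of total effective rewards times `α/(1-α)`; equality
`f α γ = MC/B` characterizes zero honest profit under elastic hash supply. -/
def f (α γ : ℝ) : ℝ := α * Nh α γ / ((1 - α) * (Na α γ + Nh α γ))

/-- Derivative of a generic degree-6 polynomial. -/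
lemma poly6 (c6 c5 c4 c3 c2 c1 c0 x : ℝ) :
    HasDerivAt (fun a : ℝ => c6*a^6+c5*a^5+c4*a^4+c3*a^3+c2*a^2+c1*a+c0)
      (6*c6*x^5+5*c5*x^4+4*c4*x^3+3*c3*x^2+2*c2*x+c1) x := by
  have h1 : HasDerivAt (fun a : ℝ => a) 1 x := hasDerivAt_id x
  have h2 := hasDerivAt_pow 2 x
  have h3 := hasDerivAt_pow 3 x
  have h4 := hasDerivAt_pow 4 x
  have h5 := hasDerivAt_pow 5 x
  have h6 := hasDerivAt_pow 6 x
  have H := (((((((h6.const_mul c6).add (h5.const_mul c5)).add (h4.const_mul c4)).add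
    (h3.const_mul c3)).add (h2.const_mul c2)).add (h1.const_mul c1)).add_const c0)
  refine H.congr_deriv ?_
  push_cast
  ring

/-- The first-order-condition polynomial, in canonical form. -/
def gp (γ a : ℝ) : ℝ :=
  (4-2*γ)*a^6 + (8*γ-16)*a^5 + γ*a^4 + (26-14*γ)*a^3 + (10*γ-16)*a^2 + (-2*γ)*a + 1

/-- Numerator of `f · γ`, in canonical form. -/
def Pf (γ a : ℝ) : ℝ :=
  0*a^6 + (2*γ-4)*a^5 + (10-5*γ)*a^4 + (4*γ-6)*a^3 + (-γ-1)*a^2 + 1*a + 0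

/-- Denominator of `f · γ`, in canonical form. -/
def Qf (a : ℝ) : ℝ :=
  0*a^6 + 0*a^5 + (-1)*a^4 + 3*a^3 + (-1)*a^2 + (-2)*a + 1

lemma Qf_pos {a : ℝ} (h0 : 0 < a) (h1 : a < 1/2) : 0 < Qf a := by
  have h2 : 0 < a^3 - 2*a^2 - a + 1 := by
    nlinarith [mul_pos h0 h0, mul_pos (mul_pos h0 h0) h0]
  have : Qf a = (1 - a) * (a^3 - 2*a^2 - a + 1) := by unfold Qf; ring
  rw [this]
  exact mul_pos (by linarith) h2

lemma f_eq (γ a : ℝ) : f a γ = Pf γ a / Qf a := by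
  simp only [f, Na, Nh, Pf, Qf]
  congr 1 <;> ring

lemma convex_comb_neg {p0 p1 γ : ℝ} (h0 : p0 < 0) (h1 : p1 < 0)
    (hγ0 : 0 ≤ γ) (hγ1 : γ ≤ 1) : (1-γ)*p0 + γ*p1 < 0 := by
  rcases le_total p0 p1 with h | h
  · nlinarith [mul_nonneg (by linarith : (0:ℝ) ≤ 1-γ) (by linarith : (0:ℝ) ≤ p1 - p0)]
  · nlinarith [mul_nonneg hγ0 (by linarith : (0:ℝ) ≤ p0 - p1)]

lemma gp_deriv_neg {γ : ℝ} (hγ0 : 0 ≤ γ) (hγ1 : γ ≤ 1) {x : ℝ}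
    (hx0 : 0 < x) (hx1 : x < 1/2) : deriv (gp γ) x < 0 := by
  have H : HasDerivAt (gp γ)
      (6*(4-2*γ)*x^5+5*(8*γ-16)*x^4+4*γ*x^3+3*(26-14*γ)*x^2+2*(10*γ-16)*x+(-2*γ)) x :=
    poly6 (4-2*γ) (8*γ-16) γ (26-14*γ) (10*γ-16) (-2*γ) 1 x
  rw [H.deriv]
  have hP0 : 24*x^5 - 80*x^4 + 78*x^2 - 32*x < 0 := by
    have hB : 24*x^4 - 80*x^3 + 78*x - 32 < 0 := by
      nlinarith [mul_pos hx0 (by linarith : (0:ℝ) < 1/2 - x), sq_nonneg x,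
        sq_nonneg (1/2 - x), mul_pos (mul_pos hx0 hx0) hx0, sq_nonneg (x*(1/2-x))]
    have : 24*x^5 - 80*x^4 + 78*x^2 - 32*x = x * (24*x^4 - 80*x^3 + 78*x - 32) := by ring
    rw [this]
    exact mul_neg_of_pos_of_neg hx0 hB
  have hP1 : 12*x^5 - 40*x^4 + 4*x^3 + 36*x^2 - 12*x - 2 < 0 := by
    nlinarith [mul_pos hx0 (by linarith : (0:ℝ) < 1/2 - x), sq_nonneg x,
      sq_nonneg (1/2 - x), mul_pos (mul_pos hx0 hx0) hx0, sq_nonneg (x*(1/2-x)),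
      mul_pos (mul_pos hx0 hx0) (mul_pos hx0 hx0),
      mul_pos (mul_pos hx0 (by linarith : (0:ℝ) < 1/2 - x))
        (mul_pos hx0 (by linarith : (0:ℝ) < 1/2 - x))]
  have key := convex_comb_neg hP0 hP1 hγ0 hγ1
  nlinarith [key]

lemma gp_continuous (γ : ℝ) : Continuous (gp γ) := by
  unfold gp; continuity

lemma gp_strictAntiOn {γ : ℝ} (hγ0 : 0 ≤ γ) (hγ1 : γ ≤ 1) :
    StrictAntiOn (gp γ) (Set.Icc 0 (1/2)) := by
  apply strictAntiOn_of_deriv_neg (convex_Icc (0:ℝ) (1/2)) (gp_continuous γ).continuousOn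
  intro x hx
  rw [interior_Icc] at hx
  exact gp_deriv_neg hγ0 hγ1 hx.1 hx.2

/-- Key equivalence: on `(0, 1/2)` the derivative of `f` vanishes iff `gp γ` does. -/
lemma deriv_f_eq_zero_iff {γ α : ℝ} (h0 : 0 < α) (h1 : α < 1/2) :
    deriv (fun a => f a γ) α = 0 ↔ gp γ α = 0 := by
  have hQ : 0 < Qf α := Qf_pos h0 h1
  have hfun : (fun a => f a γ) = fun a => Pf γ a / Qf a := funext fun a => f_eq γ a
  have hP : HasDerivAt (fun a => Pf γ a)
      (6*0*α^5+5*(2*γ-4)*α^4+4*(10-5*γ)*α^3+3*(4*γ-6)*α^2+2*(-γ-1)*α+1) α :=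
    poly6 0 (2*γ-4) (10-5*γ) (4*γ-6) (-γ-1) 1 0 α
  have hQd : HasDerivAt (fun a => Qf a)
      (6*0*α^5+5*0*α^4+4*(-1)*α^3+3*3*α^2+2*(-1)*α+(-2)) α :=
    poly6 0 0 (-1) 3 (-1) (-2) 1 α
  have H := hP.div hQd (ne_of_gt hQ)
  have hder : deriv (fun a => f a γ) α =
      ((1-α)^2 * gp γ α) / (Qf α)^2 := by
    rw [hfun, show (fun a => Pf γ a / Qf a) = ((fun a => Pf γ a) / fun a => Qf a) from rfl, H.deriv]
    congr 1
    simp only [Pf, Qf, gp]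
    ring
  rw [hder, div_eq_zero_iff]
  constructor
  · rintro (h | h)
    · rcases mul_eq_zero.1 h with h' | h'
      · exact absurd h' (pow_ne_zero 2 (by linarith : (1:ℝ) - α ≠ 0))
      · exact h'
    · exact absurd h (pow_ne_zero 2 (ne_of_gt hQ))
  · intro h
    left
    rw [h, mul_zero]

theorem unique_critical_point (γ : ℝ) (hγ0 : 0 ≤ γ) (hγ1 : γ ≤ 1) :
    (∃! α : ℝ, α ∈ Set.Ioo (0 : ℝ) (1/2) ∧
      4*α^6 - 16*α^5 + 26*α^3 - 16*α^2 + 1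
        = γ * (2*α^6 - 8*α^5 - α^4 + 14*α^3 - 10*α^2 + 2*α)) ∧
    (∃! α : ℝ, α ∈ Set.Ioo (0 : ℝ) (1/2) ∧ deriv (fun a => f a γ) α = 0) := by
  -- existence of a root of gp γ in (0, 1/2)
  have h0 : gp γ 0 = 1 := by norm_num [gp]
  have hhalf : gp γ (1/2) < 0 := by
    have : gp γ (1/2) = -3/16 + γ/32 := by norm_num [gp]; ring
    rw [this]; linarith
  have hmem : (0:ℝ) ∈ Set.Ioo (gp γ (1/2)) (gp γ 0) := ⟨hhalf, by rw [h0]; norm_num⟩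
  have hsub := intermediate_value_Ioo' (by norm_num : (0:ℝ) ≤ 1/2)
    (gp_continuous γ).continuousOn
  obtain ⟨α₀, hα₀, hroot⟩ := hsub hmem
  have sa := gp_strictAntiOn hγ0 hγ1
  have huniq : ∀ y ∈ Set.Ioo (0:ℝ) (1/2), gp γ y = 0 → y = α₀ := by
    intro y hy hgy
    have hy' : y ∈ Set.Icc (0:ℝ) (1/2) := Set.Ioo_subset_Icc_self hy
    have hα' : α₀ ∈ Set.Icc (0:ℝ) (1/2) := Set.Ioo_subset_Icc_self hα₀
    exact sa.injOn hy' hα' (by rw [hgy, hroot])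
  have hkey : ∃! α : ℝ, α ∈ Set.Ioo (0:ℝ) (1/2) ∧ gp γ α = 0 :=
    ⟨α₀, ⟨hα₀, hroot⟩, fun y hy => huniq y hy.1 hy.2⟩
  constructor
  · refine ⟨α₀, ⟨hα₀, ?_⟩, ?_⟩
    · have := hroot
      simp only [gp] at this
      linear_combination this
    · rintro y ⟨hy, heq⟩
      refine huniq y hy ?_
      simp only [gp]
      linear_combination heq
  · refine ⟨α₀, ⟨hα₀, (deriv_f_eq_zero_iff hα₀.1 hα₀.2).2 hroot⟩, ?_⟩
    rintro y ⟨hy, hdy⟩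
    exact huniq y hy ((deriv_f_eq_zero_iff hy.1 hy.2).1 hdy)

end
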